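/- Let n ∈ ℕ and let f: ℝ → ℂ be n times continuously differentiable with f^{(k)} square-integrable for all 0 ≤ k ≤ n. Then the Fourier–Plancherel transform of f^{(n)} agrees almost everywhere with ξ ↦ (2πiξ)^n f̃(ξ), where f̃ is the Fourier–Plancherel transform of f. In particular, the function ξ ↦ (2πiξ)^n f̃(ξ) lies in L²(ℝ). -/

import Mathlib

open MeasureTheory Real Complex SchwartzMap
open scoped FourierTransform ComplexConjugate

noncomputable section PlancherelAux

/-- Polarization: if `‖a - t•b‖ = ‖c - t•d‖` for all `t : ℂ`, then `⟪a,b⟫ = ⟪c,d⟫`. -/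
private lemma inner_eq_of_norm_sub_eq {H : Type*} [NormedAddCommGroup H]
    [InnerProductSpace ℂ H] {a b c d : H}
    (h : ∀ t : ℂ, ‖a - t • b‖ = ‖c - t • d‖) :
    (inner ℂ a b : ℂ) = inner ℂ c d := by
  have h0 : ‖a‖ = ‖c‖ := by simpa using h 0
  have key : ∀ t : ℂ, ‖t‖ = 1 →
      2 * (t * (inner ℂ a b : ℂ)).re - ‖b‖ ^ 2 = 2 * (t * (inner ℂ c d : ℂ)).re - ‖d‖ ^ 2 := by
    intro t ht
    have h2 : ‖a - t • b‖ ^ 2 = ‖c - t • d‖ ^ 2 := by rw [h t]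
    rw [norm_sub_sq (𝕜 := ℂ), norm_sub_sq (𝕜 := ℂ), inner_smul_right, inner_smul_right,
      norm_smul, norm_smul, ht, one_mul, h0] at h2
    simp only [RCLike.re_to_complex] at h2
    linarith
  have e1 := key 1 (by simp)
  have e2 := key (-1) (by simp)
  have e3 := key Complex.I (by simp)
  have e4 := key (-Complex.I) (by simp)
  simp only [Complex.mul_re, Complex.one_re, Complex.one_im, Complex.neg_re, Complex.neg_im,
    Complex.I_re, Complex.I_im, one_mul, zero_mul, neg_mul, neg_neg, zero_sub, sub_zero,
    neg_zero] at e1 e2 e3 e4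
  refine Complex.ext ?_ ?_ <;> linarith

/-- The Fourier integral written with explicit exponentials. -/
private lemma fourier_eq (g : ℝ → ℂ) (ξ : ℝ) :
    (∫ x : ℝ, g x * Complex.exp (-(2 * π * I * x * ξ))) = 𝓕 g ξ := by
  rw [Real.fourier_real_eq_integral_exp_smul]
  congr 1 with x
  rw [smul_eq_mul, mul_comm]
  congr 1
  push_cast
  ring_nf

private lemma schwartz_memLp (ψ : 𝓢(ℝ, ℂ)) : MemLp (⇑ψ) 2 (volume : Measure ℝ) := by
  rw [memLp_two_iff_integrable_sq_norm ψ.continuous.aestronglyMeasurable]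
  refine ((ψ.integrable (μ := volume)).norm.const_mul (SchwartzMap.seminorm ℝ 0 0 ψ)).mono'
    ((ψ.continuous.norm.pow 2).aestronglyMeasurable) ?_
  refine Filter.Eventually.of_forall fun x => ?_
  have h1 : ‖ψ x‖ ≤ SchwartzMap.seminorm ℝ 0 0 ψ := by
    simpa using ψ.le_seminorm ℝ 0 0 x
  have h2 : (0:ℝ) ≤ ‖ψ x‖ := norm_nonneg _
  calc ‖‖ψ x‖ ^ 2‖ = ‖ψ x‖ * ‖ψ x‖ := by
        rw [Real.norm_of_nonneg (by positivity)]; ring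
  _ ≤ SchwartzMap.seminorm ℝ 0 0 ψ * ‖ψ x‖ := mul_le_mul_of_nonneg_right h1 h2

private lemma integrable_conj_mul {f g : ℝ → ℂ} (hf : MemLp f 2 (volume : Measure ℝ))
    (hg : MemLp g 2 (volume : Measure ℝ)) :
    Integrable (fun x => conj (f x) * g x) (volume : Measure ℝ) := by
  have h := L2.integrable_inner (𝕜 := ℂ) (hf.toLp f) (hg.toLp g)
  refine h.congr ?_
  filter_upwards [hf.coeFn_toLp, hg.coeFn_toLp] with x hx hy
  rw [hx, hy, RCLike.inner_apply']

/-- Iterated derivative of a Schwartz function, as a Schwartz function. -/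
private def iterDeriv (k : ℕ) (ψ : 𝓢(ℝ, ℂ)) : 𝓢(ℝ, ℂ) := (SchwartzMap.derivCLM ℝ ℂ)^[k] ψ

private lemma iterDeriv_coe (k : ℕ) : ∀ ψ : 𝓢(ℝ, ℂ), ⇑(iterDeriv k ψ) = iteratedDeriv k ⇑ψ := by
  induction k with
  | zero => intro ψ; simp [iterDeriv, iteratedDeriv_zero]
  | succ k ih =>
    intro ψ
    have h1 : iterDeriv (k + 1) ψ = iterDeriv k (SchwartzMap.derivCLM ℝ ℂ ψ) :=
      Function.iterate_succ_apply _ _ _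
    rw [h1, ih, iteratedDeriv_succ']
    congr 1

/-- From the characterization of the Plancherel transform by distances, derive the
pairing identity against Schwartz functions, together with square-integrability. -/
private lemma pairing_of_char {f ft : ℝ → ℂ}
    (hf2 : MemLp f 2 (volume : Measure ℝ))
    (hftm : AEStronglyMeasurable ft (volume : Measure ℝ))
    (hchar : ∀ g : ℝ → ℂ, Integrable g → MemLp g 2 (volume : Measure ℝ) →
      eLpNorm (fun ξ : ℝ => ft ξ - ∫ x : ℝ, g x * Complex.exp (-(2 * π * I * x * ξ)))
        2 (volume : Measure ℝ)
      = eLpNorm (fun x : ℝ => f x - g x) 2 (volume : Measure ℝ)) :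
    MemLp ft 2 (volume : Measure ℝ) ∧
      ∀ ψ : 𝓢(ℝ, ℂ), (∫ ξ : ℝ, conj (ft ξ) * 𝓕 (⇑ψ) ξ) = ∫ x : ℝ, conj (f x) * ψ x := by
  have hft2 : MemLp ft 2 (volume : Measure ℝ) := by
    have h0 := hchar 0 (integrable_zero _ _ _) MemLp.zero
    simp only [Pi.zero_apply, zero_mul, integral_zero, sub_zero] at h0
    exact ⟨hftm, by rw [h0]; exact hf2.2⟩
  refine ⟨hft2, fun ψ => ?_⟩
  set Fψ : 𝓢(ℝ, ℂ) := FourierTransform.fourierCLE ℂ 𝓢(ℝ, ℂ) ψ with hFψdef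
  have hFψ : ⇑Fψ = 𝓕 ⇑ψ := rfl
  have hnorm : ∀ t : ℂ,
      ‖hft2.toLp ft - t • (schwartz_memLp Fψ).toLp ⇑Fψ‖
        = ‖hf2.toLp f - t • (schwartz_memLp ψ).toLp ⇑ψ‖ := by
    intro t
    rw [← MemLp.toLp_const_smul, ← MemLp.toLp_sub, ← MemLp.toLp_const_smul, ← MemLp.toLp_sub,
      Lp.norm_toLp, Lp.norm_toLp]
    have hc := hchar ⇑(t • ψ) (t • ψ).integrable (schwartz_memLp _)
    have h1 : (fun ξ : ℝ => ft ξ - ∫ x : ℝ, (t • ψ) x * Complex.exp (-(2 * π * I * x * ξ)))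
        = ft - t • ⇑Fψ := by
      funext ξ
      rw [_root_.fourier_eq]
      have : 𝓕 ⇑(t • ψ) ξ = (t • ⇑Fψ) ξ := by
        show ((FourierTransform.fourierCLE ℂ 𝓢(ℝ, ℂ)) (t • ψ)) ξ = _
        rw [_root_.map_smul]
        rfl
      simp only [Pi.sub_apply, this]
    have h2 : (fun x : ℝ => f x - (t • ψ) x) = f - t • ⇑ψ := rfl
    rw [h1, h2] at hc
    rw [hc]
  have hinner := inner_eq_of_norm_sub_eq hnorm
  rw [L2.inner_def, L2.inner_def] at hinner
  have hA : (∫ ξ : ℝ, (inner ℂ ((hft2.toLp ft) ξ) (((schwartz_memLp Fψ).toLp ⇑Fψ) ξ) : ℂ))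
      = ∫ ξ : ℝ, conj (ft ξ) * ⇑Fψ ξ := by
    refine integral_congr_ae ?_
    filter_upwards [hft2.coeFn_toLp, (schwartz_memLp Fψ).coeFn_toLp] with ξ h1 h2
    rw [h1, h2, RCLike.inner_apply']
  have hC : (∫ x : ℝ, (inner ℂ ((hf2.toLp f) x) (((schwartz_memLp ψ).toLp ⇑ψ) x) : ℂ))
      = ∫ x : ℝ, conj (f x) * ψ x := by
    refine integral_congr_ae ?_
    filter_upwards [hf2.coeFn_toLp, (schwartz_memLp ψ).coeFn_toLp] with x h1 h2
    rw [h1, h2, RCLike.inner_apply']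
  rw [hA, hC] at hinner
  rw [← hFψ]
  exact hinner

/-- One integration by parts against a Schwartz function. -/
private lemma ibp_step {u : ℝ → ℂ} (hu : Differentiable ℝ u)
    (hu2 : MemLp u 2 (volume : Measure ℝ)) (hu'2 : MemLp (deriv u) 2 (volume : Measure ℝ))
    (ψ : 𝓢(ℝ, ℂ)) :
    ∫ x : ℝ, conj (deriv u x) * ψ x = - ∫ x : ℝ, conj (u x) * deriv (⇑ψ) x := by
  have hd2 : MemLp (deriv (⇑ψ)) 2 (volume : Measure ℝ) := schwartz_memLp (SchwartzMap.derivCLM ℝ ℂ ψ)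
  have hu' : ∀ x : ℝ, HasDerivAt (fun y => conj (u y)) (conj (deriv u x)) x := by
    intro x
    simpa only [starRingEnd_apply] using ((hu x).hasDerivAt).star
  have hv' : ∀ x : ℝ, HasDerivAt (⇑ψ) (deriv (⇑ψ) x) x := fun x =>
    ψ.differentiableAt.hasDerivAt
  have h := MeasureTheory.integral_mul_deriv_eq_deriv_mul_of_integrable (fun x _ => hu' x) (fun x _ => hv' x)
    (integrable_conj_mul hu2 hd2) (integrable_conj_mul hu'2 (schwartz_memLp ψ))
    (integrable_conj_mul hu2 (schwartz_memLp ψ))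
  rw [h, neg_neg]

end PlancherelAux


open MeasureTheory Real Complex SchwartzMap
open scoped FourierTransform ComplexConjugate

/-- If `f` is `n` times continuously differentiable with all derivatives `f^{(k)}`, `k ≤ n`,
square-integrable, then the Fourier–Plancherel transform of `f^{(n)}` agrees almost everywhere
with `ξ ↦ (2πiξ)^n f̃(ξ)`; in particular the latter function is square-integrable.
Here the Fourier–Plancherel transforms `ftilde` of `f` and `gtilde` of `f^{(n)}` are
characterized by being at `L²`-distance `‖f - g‖₂` (resp. `‖f^{(n)} - g‖₂`) from the Fourier
integral of any `g ∈ L¹ ∩ L²`. -/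
theorem plancherel_iteratedDeriv
    (n : ℕ) (f ftilde gtilde : ℝ → ℂ)
    (hf : ContDiff ℝ n f)
    (hL2 : ∀ k ≤ n, MemLp (iteratedDeriv k f) 2 (volume : Measure ℝ))
    (hftm : AEStronglyMeasurable ftilde (volume : Measure ℝ))
    (hfchar : ∀ g : ℝ → ℂ, Integrable g → MemLp g 2 (volume : Measure ℝ) →
      eLpNorm (fun ξ : ℝ =>
          ftilde ξ - ∫ x : ℝ, g x * Complex.exp (-(2 * π * I * x * ξ)))
        2 (volume : Measure ℝ)
      = eLpNorm (fun x : ℝ => f x - g x) 2 (volume : Measure ℝ))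
    (hgtm : AEStronglyMeasurable gtilde (volume : Measure ℝ))
    (hgchar : ∀ g : ℝ → ℂ, Integrable g → MemLp g 2 (volume : Measure ℝ) →
      eLpNorm (fun ξ : ℝ =>
          gtilde ξ - ∫ x : ℝ, g x * Complex.exp (-(2 * π * I * x * ξ)))
        2 (volume : Measure ℝ)
      = eLpNorm (fun x : ℝ => iteratedDeriv n f x - g x) 2 (volume : Measure ℝ)) :
    (∀ᵐ ξ : ℝ ∂(volume : Measure ℝ),
        gtilde ξ = (2 * π * I * ξ) ^ n * ftilde ξ)
    ∧ MemLp (fun ξ : ℝ => (2 * π * I * ξ) ^ n * ftilde ξ) 2 (volume : Measure ℝ) := by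
  have hf2 : MemLp f 2 (volume : Measure ℝ) := by
    simpa [iteratedDeriv_zero] using hL2 0 (Nat.zero_le n)
  obtain ⟨hft2, hSA⟩ := pairing_of_char hf2 hftm hfchar
  obtain ⟨hgt2, hSG⟩ := pairing_of_char (hL2 n le_rfl) hgtm hgchar
  -- iterated integration by parts
  have hibp : ∀ k, k ≤ n → ∀ ψ : 𝓢(ℝ, ℂ),
      (∫ x : ℝ, conj (iteratedDeriv k f x) * ψ x)
        = (-1 : ℂ) ^ k * ∫ x : ℝ, conj (f x) * iteratedDeriv k (⇑ψ) x := by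
    intro k
    induction k with
    | zero => intro _ ψ; simp [iteratedDeriv_zero]
    | succ k ih =>
      intro hk ψ
      have hk' : k ≤ n := Nat.le_of_succ_le hk
      have hdiff : Differentiable ℝ (iteratedDeriv k f) :=
        hf.differentiable_iteratedDeriv k (by exact_mod_cast Nat.lt_of_succ_le hk)
      have hstep := ibp_step hdiff (hL2 k hk')
        (by rw [← iteratedDeriv_succ]; exact hL2 (k+1) hk) ψ
      rw [iteratedDeriv_succ, hstep]
      have ihd := ih hk' (SchwartzMap.derivCLM ℝ ℂ ψ)
      have hcoe : ⇑(SchwartzMap.derivCLM ℝ ℂ ψ) = deriv (⇑ψ) := rfl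
      rw [hcoe] at ihd
      rw [ihd, ← iteratedDeriv_succ']
      ring
  -- Fourier transform of iterated derivatives of Schwartz functions
  have hSC : ∀ ψ : 𝓢(ℝ, ℂ),
      𝓕 (iteratedDeriv n (⇑ψ)) = fun ξ : ℝ => (2 * π * I * ξ) ^ n • 𝓕 (⇑ψ) ξ := by
    intro ψ
    refine Real.fourier_iteratedDeriv (N := (⊤ : ℕ∞)) (ψ.smooth ⊤) (fun m _ => ?_) le_top
    rw [← iterDeriv_coe]
    exact (iterDeriv m ψ).integrable
  -- the key identity, tested against Fourier transforms of Schwartz functions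
  have key : ∀ ψ : 𝓢(ℝ, ℂ),
      (∫ ξ : ℝ, conj (gtilde ξ) * 𝓕 (⇑ψ) ξ)
        = ∫ ξ : ℝ, conj ((2 * π * I * ξ) ^ n * ftilde ξ) * 𝓕 (⇑ψ) ξ := by
    intro ψ
    have h3 := hSA (iterDeriv n ψ)
    rw [iterDeriv_coe] at h3
    simp only [hSC ψ] at h3
    rw [hSG ψ, hibp n le_rfl ψ, ← h3, ← smul_eq_mul, ← integral_smul]
    congr 1
    funext ξ
    have hc : (starRingEnd ℂ) ((2 * ↑π * I * (ξ:ℂ)) ^ n)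
        = (-1 : ℂ) ^ n * (2 * ↑π * I * (ξ:ℂ)) ^ n := by
      rw [map_pow, show (starRingEnd ℂ) (2 * ↑π * I * (ξ:ℂ)) = -(2 * ↑π * I * (ξ:ℂ)) by
        simp [map_mul, map_ofNat, Complex.conj_I, Complex.conj_ofReal], neg_pow]
    simp only [smul_eq_mul, map_mul, hc]
    ring
  -- measurability and local integrability of both sides
  have hmulm : AEStronglyMeasurable (fun ξ : ℝ => (2 * π * I * ξ) ^ n * ftilde ξ)
      (volume : Measure ℝ) := by
    refine (Continuous.aestronglyMeasurable ?_).mul hftm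
    fun_prop
  have hloc1 : LocallyIntegrable (fun ξ : ℝ => conj (gtilde ξ)) (volume : Measure ℝ) := by
    refine (MemLp.of_le hgt2 ?_ (Filter.Eventually.of_forall fun x => by simp)).locallyIntegrable
      one_le_two
    exact RCLike.continuous_conj.comp_aestronglyMeasurable hgt2.1
  have hloc2 : LocallyIntegrable (fun ξ : ℝ => conj ((2 * π * I * ξ) ^ n * ftilde ξ))
      (volume : Measure ℝ) := by
    rw [locallyIntegrable_iff]
    intro K hK
    obtain ⟨r, hr⟩ := hK.isBounded.subset_closedBall 0
    have hip : IntegrableOn ftilde K (volume : Measure ℝ) :=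
      (hft2.locallyIntegrable one_le_two).integrableOn_isCompact hK
    refine (hip.norm.const_mul ((2 * π * |r|) ^ n)).mono'
      ((RCLike.continuous_conj.comp_aestronglyMeasurable hmulm).restrict) ?_
    filter_upwards [ae_restrict_mem hK.measurableSet] with ξ hξ
    have hξr : |ξ| ≤ |r| := by
      have h := hr hξ
      simp only [Metric.mem_closedBall, Real.dist_eq, sub_zero] at h
      exact h.trans (le_abs_self r)
    have hbase : ‖2 * (π:ℂ) * I * (ξ:ℂ)‖ = 2 * π * |ξ| := by
      simp only [norm_mul, Complex.norm_I, Complex.norm_real, Real.norm_eq_abs, mul_one,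
        Complex.norm_ofNat]
      rw [_root_.abs_of_nonneg Real.pi_pos.le]
    have hnorm1 : ‖(2 * π * I * (ξ:ℂ)) ^ n‖ = (2 * π * |ξ|) ^ n := by
      rw [norm_pow, hbase]
    calc ‖conj ((2 * π * I * (ξ:ℂ)) ^ n * ftilde ξ)‖
        = ‖(2 * π * I * (ξ:ℂ)) ^ n‖ * ‖ftilde ξ‖ := by rw [RCLike.norm_conj, norm_mul]
      _ ≤ (2 * π * |r|) ^ n * ‖ftilde ξ‖ := by
          rw [hnorm1]
          gcongr
  -- conclude with the density of test functions
  have hconj_ae : ∀ᵐ ξ : ℝ ∂(volume : Measure ℝ),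
      conj (gtilde ξ) = conj ((2 * π * I * ξ) ^ n * ftilde ξ) := by
    refine ae_eq_of_integral_contDiff_smul_eq hloc1 hloc2 ?_
    intro g hg hgsupp
    have hθc : ContDiff ℝ (↑(⊤:ℕ∞)) (fun x : ℝ => (g x : ℂ)) :=
      Complex.ofRealCLM.contDiff.comp hg
    have hθs : HasCompactSupport (fun x : ℝ => (g x : ℂ)) :=
      hgsupp.comp_left (g := fun r : ℝ => (r : ℂ)) Complex.ofReal_zero
    have hdecay : ∀ (k m : ℕ), ∃ C, ∀ x : ℝ,
        ‖x‖ ^ k * ‖iteratedFDeriv ℝ m (fun x : ℝ => (g x : ℂ)) x‖ ≤ C := by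
      intro k m
      have hFs : HasCompactSupport (iteratedFDeriv ℝ m (fun x : ℝ => (g x : ℂ))) :=
        hθs.iteratedFDeriv m
      have hFc : Continuous (iteratedFDeriv ℝ m (fun x : ℝ => (g x : ℂ))) :=
        hθc.continuous_iteratedFDeriv (mod_cast le_top)
      have hφs : HasCompactSupport
          (fun x : ℝ => ‖x‖ ^ k * ‖iteratedFDeriv ℝ m (fun x : ℝ => (g x : ℂ)) x‖) :=
        HasCompactSupport.mul_left hFs.norm
      have hφc : Continuous
          (fun x : ℝ => ‖x‖ ^ k * ‖iteratedFDeriv ℝ m (fun x : ℝ => (g x : ℂ)) x‖) :=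
        (continuous_norm.pow k).mul hFc.norm
      obtain ⟨C, hC⟩ := hφc.bounded_above_of_compact_support hφs
      exact ⟨C, fun x => le_trans (le_abs_self _)
        (by rw [← Real.norm_eq_abs]; exact hC x)⟩
    set θ : 𝓢(ℝ, ℂ) := ⟨fun x => (g x : ℂ), hθc, hdecay⟩ with hθdef
    have hθcoe : ⇑θ = fun x : ℝ => (g x : ℂ) := rfl
    set ψ := (FourierTransform.fourierCLE ℂ 𝓢(ℝ, ℂ)).symm θ with hψdef
    have hFψθ : 𝓕 (⇑ψ) = ⇑θ := by
      show ⇑(FourierTransform.fourierCLE ℂ 𝓢(ℝ, ℂ) ψ) = _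
      rw [hψdef, ContinuousLinearEquiv.apply_symm_apply]
    have hk := key ψ
    rw [hFψθ] at hk
    calc (∫ ξ : ℝ, g ξ • conj (gtilde ξ))
        = ∫ ξ : ℝ, conj (gtilde ξ) * θ ξ := by
          congr 1; funext ξ; rw [hθcoe]; simp [Complex.real_smul]; ring
      _ = ∫ ξ : ℝ, conj ((2 * π * I * ξ) ^ n * ftilde ξ) * θ ξ := hk
      _ = ∫ ξ : ℝ, g ξ • conj ((2 * π * I * ξ) ^ n * ftilde ξ) := by
          congr 1; funext ξ; rw [hθcoe]; simp [Complex.real_smul]; ring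
  have h_ae : ∀ᵐ ξ : ℝ ∂(volume : Measure ℝ),
      gtilde ξ = (2 * π * I * ξ) ^ n * ftilde ξ := by
    filter_upwards [hconj_ae] with ξ hξ
    have := congrArg (starRingEnd ℂ) hξ
    simpa using this
  refine ⟨h_ae, ?_⟩
  have hsymm : (fun ξ : ℝ => (2 * π * I * ξ) ^ n * ftilde ξ) =ᵐ[(volume : Measure ℝ)] gtilde := by
    filter_upwards [h_ae] with ξ hξ
    exact hξ.symm
  exact ⟨hmulm, by rw [eLpNorm_congr_ae hsymm]; exact hgt2.2⟩
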